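/- Let G be a graph with n vertices containing an odd cycle a_0, a_1, ..., a_N = a_0 (N odd). Then there is no 3-strategy on G and K_2; that is, there is no nonempty family H of partial homomorphisms from G to K_2 with domains of size at most 3 that is closed under restriction and has the extension property up to 3. -/

import Mathlib

/-- `H` is a `k`-strategy on the graph `G` and the complete graph `K_q`:
a nonempty family of partial homomorphisms (partial proper `q`-colorings,
encoded as maps `V → Option (Fin q)`) with domains of size at most `k`,
closed under restrictions, and with the extension property up to `k`. -/
def IsStrategy {V : Type*} (G : SimpleGraph V) (q k : ℕ)
    (H : Set (V → Option (Fin q))) : Prop :=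
  H.Nonempty ∧
  (∀ h ∈ H, ∀ u v : V, G.Adj u v →
    ∀ a b : Fin q, h u = some a → h v = some b → a ≠ b) ∧
  (∀ h ∈ H, {v | h v ≠ none}.Finite ∧ {v | h v ≠ none}.ncard ≤ k) ∧
  (∀ h ∈ H, ∀ h' : V → Option (Fin q),
    (∀ v, h' v = h v ∨ h' v = none) → h' ∈ H) ∧
  (∀ h ∈ H, {v | h v ≠ none}.ncard < k → ∀ x, h x = none →
    ∃ h' ∈ H, (∀ v, v ≠ x → h' v = h v) ∧ h' x ≠ none)

/-- A graph containing a closed walk of odd length (an odd cycle) admits no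
3-strategy with respect to `K_2`. -/
theorem no_three_strategy_of_odd_cycle {V : Type*} [Fintype V]
    (G : SimpleGraph V) (N : ℕ) (hodd : Odd N) (a : ℕ → V)
    (hadj : ∀ i < N, G.Adj (a i) (a (i + 1))) (hclosed : a N = a 0) :
    ¬ ∃ H : Set (V → Option (Fin 2)), IsStrategy G 2 3 H := by
  classical
  rintro ⟨H, ⟨h0, hh0⟩, hhom, hdom, hres, hext⟩
  have hne2 : ∀ x y : Fin 2, x ≠ y → y = x + 1 := by decide
  have key2 : ∀ c d : Fin 2, c + d ≠ c → c + (d + 1) = c := by decide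
  -- the empty partial map is in H
  have hempty : (fun _ : V => (none : Option (Fin 2))) ∈ H :=
    hres h0 hh0 _ (fun v => Or.inr rfl)
  have hempty_card : {v : V | (fun _ : V => (none : Option (Fin 2))) v ≠ none}.ncard < 3 := by
    simp
  -- start: get some color on a 0
  obtain ⟨h1, hh1, h1eq, h1ne⟩ := hext _ hempty hempty_card (a 0) rfl
  obtain ⟨c0, hc0⟩ : ∃ c0, h1 (a 0) = some c0 := Option.ne_none_iff_exists'.mp h1ne
  -- invariant along the walk
  open Fin.NatCast in
  have key : ∀ i ≤ N, ∃ h ∈ H, h (a 0) = some c0 ∧ h (a i) = some (c0 + (i : Fin 2)) := by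
    intro i hi
    induction i with
    | zero => exact ⟨h1, hh1, hc0, by simpa using hc0⟩
    | succ i ih =>
      obtain ⟨h, hh, ha0, hai⟩ := ih (le_of_lt (Nat.lt_of_succ_le hi))
      have hadji := hadj i (Nat.lt_of_succ_le hi)
      have hcast : ((i + 1 : ℕ) : Fin 2) = (i : Fin 2) + 1 := by push_cast; ring
      by_cases hca : a (i + 1) = a 0
      · refine ⟨h, hh, ha0, ?_⟩
        have hne := hhom h hh _ _ hadji _ _ hai (hca ▸ ha0)
        rw [hca, ha0, hcast, key2 _ _ hne]
      · have hne' : a (i + 1) ≠ a i := fun e => hadji.ne e.symm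
        set h' : V → Option (Fin 2) :=
          fun v => if v = a 0 ∨ v = a i then h v else none with hh'def
        have hh' : h' ∈ H := hres h hh h' (fun v => by
          by_cases hc : v = a 0 ∨ v = a i <;> simp [hh'def, hc])
        have h'a0 : h' (a 0) = some c0 := by simp [hh'def, ha0]
        have h'ai : h' (a i) = some (c0 + (i : Fin 2)) := by simp [hh'def, hai]
        have h'ai1 : h' (a (i + 1)) = none := by
          simp [hh'def, hca, hne']
        have hsub : {v : V | h' v ≠ none} ⊆ {a 0, a i} := by
          intro v hv
          by_contra hvc
          simp only [Set.mem_insert_iff, Set.mem_singleton_iff, not_or] at hvc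
          exact hv (by simp [hh'def, hvc.1, hvc.2])
        have hcard : {v : V | h' v ≠ none}.ncard < 3 := by
          have h1 := Set.ncard_le_ncard hsub (Set.toFinite _)
          have h2 : ({a 0, a i} : Set V).ncard ≤ 2 := by
            have := Set.ncard_insert_le (a 0) ({a i} : Set V)
            simpa using this
          omega
        obtain ⟨h'', hh'', heq, hne''⟩ := hext h' hh' hcard (a (i + 1)) h'ai1
        obtain ⟨b, hb⟩ : ∃ b, h'' (a (i + 1)) = some b :=
          Option.ne_none_iff_exists'.mp hne''
        have h''a0 : h'' (a 0) = some c0 := by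
          rw [heq (a 0) (fun e => hca e.symm), h'a0]
        have h''ai : h'' (a i) = some (c0 + (i : Fin 2)) := by
          rw [heq (a i) (fun e => hne' e.symm), h'ai]
        have hneb := hhom h'' hh'' _ _ hadji _ _ h''ai hb
        refine ⟨h'', hh'', h''a0, ?_⟩
        rw [hb, hcast, hne2 _ _ hneb, add_assoc]
  obtain ⟨h, hh, ha0, haN⟩ := key N le_rfl
  rw [hclosed, ha0] at haN
  open Fin.NatCast in
  have hN0 : ((N : ℕ) : Fin 2) = 0 := by
    have := Option.some.inj haN
    have := left_eq_add.mp this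
    exact this
  have : N % 2 = 0 := by
    have := congrArg Fin.val hN0
    simpa [Fin.val_natCast] using this
  have := Nat.odd_iff.mp hodd
  omega
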